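/- Fix an integer n ≥ 2 and a real number r with 0 < r < √2/2, and define g(d) = 1 − [(1 − r^d)(1 − (n − 1)(1 − r²)^{d/2}/2)]^n for positive integers d. Then g(d) is asymptotically equivalent to (n(n−1)/2)·(1 − r²)^{d/2} as d → ∞, i.e., g(d)/((n(n−1)/2)·(1 − r²)^{d/2}) → 1 as d → ∞. -/

import Mathlib

open Filter

/-- **Statement 3, case 2.** For a fixed integer `n ≥ 2` and fixed
`0 < r < √2/2`, the Gorban–Burton–Tyukin failure-probability bound
`g(d) = 1 - [(1 - r^d)(1 - (n-1)(1-r²)^{d/2}/2)]^n` satisfies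
`g(d) ~ (n(n-1)/2)·(1-r²)^{d/2}` as `d → ∞`. -/
theorem fisher_failure_bound_asymp_small_r
    (n : ℕ) (hn : 2 ≤ n) (r : ℝ) (hr0 : 0 < r) (hr1 : r < Real.sqrt 2 / 2) :
    Tendsto (fun d : ℕ =>
        (1 - ((1 - r ^ d) * (1 - ((n : ℝ) - 1) * (1 - r ^ 2) ^ ((d : ℝ) / 2) / 2)) ^ n) /
          ((n : ℝ) * ((n : ℝ) - 1) / 2 * (1 - r ^ 2) ^ ((d : ℝ) / 2)))
      atTop (nhds 1) := by
  have h2 : (0:ℝ) < Real.sqrt 2 := Real.sqrt_pos.2 (by norm_num)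
  have hrsq : r ^ 2 < 1 / 2 := by
    have : r ^ 2 < (Real.sqrt 2 / 2) ^ 2 := by
      apply pow_lt_pow_left₀ hr1 (le_of_lt hr0)
      norm_num
    calc r ^ 2 < (Real.sqrt 2 / 2) ^ 2 := this
      _ = 1 / 2 := by
        rw [div_pow, Real.sq_sqrt (by norm_num : (0:ℝ) ≤ 2)]; norm_num
  have h1r2 : (0:ℝ) < 1 - r ^ 2 := by linarith
  set s := Real.sqrt (1 - r ^ 2) with hs_def
  have hs0 : 0 < s := Real.sqrt_pos.2 h1r2
  have hs1 : s < 1 := by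
    nlinarith [Real.sq_sqrt (le_of_lt h1r2), Real.sqrt_nonneg (1 - r ^ 2)]
  have hr_lt_s : r < s := by
    rw [hs_def]
    have : r ^ 2 < 1 - r ^ 2 := by linarith
    exact (Real.lt_sqrt (le_of_lt hr0)).2 this
  have hr_lt_1 : r < 1 := lt_trans hr_lt_s hs1
  -- rewrite rpow as s ^ d
  have hpow : ∀ d : ℕ, (1 - r ^ 2) ^ ((d : ℝ) / 2) = s ^ d := by
    intro d
    rw [show ((d:ℝ)/2) = (1/2 : ℝ) * (d:ℝ) by ring,
      Real.rpow_mul (le_of_lt h1r2), Real.rpow_natCast, hs_def, Real.sqrt_eq_rpow]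
  have hn1 : (0:ℝ) < (n:ℝ) - 1 := by
    have : (2:ℝ) ≤ (n:ℝ) := by exact_mod_cast hn
    linarith
  have hnpos : (0:ℝ) < (n:ℝ) := by linarith
  -- the algebraic identity
  have key : ∀ d : ℕ,
      (1 - ((1 - r ^ d) * (1 - ((n : ℝ) - 1) * (1 - r ^ 2) ^ ((d : ℝ) / 2) / 2)) ^ n) /
          ((n : ℝ) * ((n : ℝ) - 1) / 2 * (1 - r ^ 2) ^ ((d : ℝ) / 2))
      = ((2 / ((n:ℝ) - 1)) * (r / s) ^ d + (1 - r ^ d)) *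
          ((∑ k ∈ Finset.range n, ((1 - r ^ d) * (1 - ((n:ℝ) - 1) * s ^ d / 2)) ^ k) / n) := by
    intro d
    rw [hpow d]
    set y : ℝ := (1 - r ^ d) * (1 - ((n:ℝ) - 1) * s ^ d / 2) with hy
    clear_value y
    have hgeom : 1 - y ^ n = (1 - y) * ∑ k ∈ Finset.range n, y ^ k := by
      have := geom_sum_mul y n
      linear_combination this
    have h1y : 1 - y = r ^ d + ((n:ℝ) - 1) * s ^ d / 2 * (1 - r ^ d) := by
      rw [hy]; ring
    rw [hgeom, h1y, div_pow]
    have hsd : s ^ d ≠ 0 := pow_ne_zero _ (ne_of_gt hs0)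
    set S : ℝ := ∑ k ∈ Finset.range n, y ^ k with hS
    clear_value S
    field_simp
  simp only [key]
  -- limits
  have hT : Tendsto (fun d : ℕ => r ^ d) atTop (nhds 0) :=
    tendsto_pow_atTop_nhds_zero_of_lt_one (le_of_lt hr0) hr_lt_1
  have hU : Tendsto (fun d : ℕ => (r / s) ^ d) atTop (nhds 0) :=
    tendsto_pow_atTop_nhds_zero_of_lt_one (div_nonneg (le_of_lt hr0) (le_of_lt hs0))
      ((div_lt_one hs0).2 hr_lt_s)
  have hS : Tendsto (fun d : ℕ => s ^ d) atTop (nhds 0) :=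
    tendsto_pow_atTop_nhds_zero_of_lt_one (le_of_lt hs0) hs1
  have hY : Tendsto (fun d : ℕ => (1 - r ^ d) * (1 - ((n:ℝ) - 1) * s ^ d / 2)) atTop
      (nhds ((1 - 0) * (1 - ((n:ℝ) - 1) * 0 / 2))) := by
    exact ((tendsto_const_nhds.sub hT).mul
      (tendsto_const_nhds.sub (((tendsto_const_nhds.mul hS).div_const 2))))
  have hY1 : Tendsto (fun d : ℕ => (1 - r ^ d) * (1 - ((n:ℝ) - 1) * s ^ d / 2)) atTop
      (nhds 1) := by simpa using hY
  have hcont : Continuous (fun y : ℝ => ∑ k ∈ Finset.range n, y ^ k) := by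
    continuity
  have hSum : Tendsto (fun d : ℕ =>
      ∑ k ∈ Finset.range n, ((1 - r ^ d) * (1 - ((n:ℝ) - 1) * s ^ d / 2)) ^ k) atTop
      (nhds ((n : ℝ))) := by
    have := (hcont.tendsto 1).comp hY1
    simpa [Function.comp_def] using this
  have hfinal : Tendsto (fun d : ℕ =>
      ((2 / ((n:ℝ) - 1)) * (r / s) ^ d + (1 - r ^ d)) *
        ((∑ k ∈ Finset.range n, ((1 - r ^ d) * (1 - ((n:ℝ) - 1) * s ^ d / 2)) ^ k) / n)) atTop
      (nhds (((2 / ((n:ℝ) - 1)) * 0 + (1 - 0)) * ((n:ℝ) / n))) := by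
    exact ((tendsto_const_nhds.mul hU).add (tendsto_const_nhds.sub hT)).mul
      (hSum.div_const _)
  have : ((2 / ((n:ℝ) - 1)) * 0 + (1 - 0)) * ((n:ℝ) / n) = 1 := by
    field_simp
    ring
  rwa [this] at hfinal
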